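/- In the DR setup, suppose additionally that Y : Ω → ℝ is integrable, that μ0, μ1 : E → ℝ are measurable with μ0 ∘ X and μ1 ∘ X integrable, and that the conditional moment conditions E[A·Y | 𝒢] = (e·μ1) ∘ X and E[(1 − A)·Y | 𝒢] = ((1 − e)·μ0) ∘ X hold P-almost surely. Let d ≥ 1, let b : E → ℝ^d be measurable and bounded, and let θ₀ ∈ ℝ^d satisfy μ1(x) − μ0(x) = ⟨b(x), θ₀⟩ for all x ∈ E (correct linear specification of the CATE in the feature map b). Define the oracle doubly robust pseudo-outcome ψ⁰ := μ1(X) − μ0(X) + w(X, A)·(Y − A·μ1(X) − (1 − A)·μ0(X)), and assume ψ⁰ is integrable. Then E[b(X)·(ψ⁰ − ⟨b(X), θ₀⟩)] = 0 in ℝ^d. (Second-stage moment condition: the oracle pseudo-outcome satisfies the population least-squares normal equations at the true second-stage coefficient θ₀.) -/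
import Mathlib


open MeasureTheory RealInnerProductSpace

/-- Second-stage moment condition: under correct linear specification of the
CATE in the feature map `b`, the oracle doubly robust pseudo-outcome satisfies
the population least-squares normal equations at the true second-stage
coefficient `θ₀`. -/
theorem dr_second_stage_moment_condition
    {Ω : Type*} [MeasurableSpace Ω] (P : Measure Ω) [IsProbabilityMeasure P]
    {E : Type*} [mE : MeasurableSpace E]
    (X : Ω → E) (hX : Measurable X)
    (A : Ω → ℝ) (hA : Measurable A) (hA01 : ∀ ω, A ω = 0 ∨ A ω = 1)
    (ε : ℝ) (hε0 : 0 < ε) (hε12 : ε ≤ 1 / 2)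
    (e : E → ℝ) (he : Measurable e) (hebd : ∀ x, ε ≤ e x ∧ e x ≤ 1 - ε)
    (hcondA : P[A | mE.comap X] =ᵐ[P] fun ω => e (X ω))
    (Y : Ω → ℝ) (hY : Integrable Y P)
    (μ0 μ1 : E → ℝ) (hμ0 : Measurable μ0) (hμ1 : Measurable μ1)
    (hμ0i : Integrable (fun ω => μ0 (X ω)) P)
    (hμ1i : Integrable (fun ω => μ1 (X ω)) P)
    (hc1 : P[fun ω => A ω * Y ω | mE.comap X]
        =ᵐ[P] fun ω => e (X ω) * μ1 (X ω))
    (hc0 : P[fun ω => (1 - A ω) * Y ω | mE.comap X]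
        =ᵐ[P] fun ω => (1 - e (X ω)) * μ0 (X ω))
    (d : ℕ) (hd : 1 ≤ d)
    (b : E → EuclideanSpace ℝ (Fin d)) (hb : Measurable b)
    (hbbd : ∃ K, ∀ x, ‖b x‖ ≤ K)
    (θ₀ : EuclideanSpace ℝ (Fin d))
    (hspec : ∀ x, μ1 x - μ0 x = ⟪b x, θ₀⟫)
    (ψ : Ω → ℝ)
    (hψ : ∀ ω, ψ ω = μ1 (X ω) - μ0 (X ω) +
      ((A ω - e (X ω)) / (e (X ω) * (1 - e (X ω)))) *
        (Y ω - A ω * μ1 (X ω) - (1 - A ω) * μ0 (X ω)))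
    (hψi : Integrable ψ P) :
    ∫ ω, (ψ ω - ⟪b (X ω), θ₀⟫) • b (X ω) ∂P = 0 := by
  obtain ⟨K, hK⟩ := hbbd
  have hm : mE.comap X ≤ ‹MeasurableSpace Ω› := hX.comap_le
  have hXm : Measurable[mE.comap X] X := Measurable.of_comap_le le_rfl
  -- basic facts about e
  have he0 : ∀ x, 0 < e x := fun x => lt_of_lt_of_le hε0 (hebd x).1
  have he1 : ∀ x, e x < 1 := fun x =>
    lt_of_le_of_lt (hebd x).2 (by linarith)
  -- A is bounded by 1
  have hAbd : ∀ ω, ‖A ω‖ ≤ 1 := by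
    intro ω; rcases hA01 ω with h | h <;> simp [h]
  have hAi : Integrable A P :=
    (integrable_const (1 : ℝ)).mono' hA.aestronglyMeasurable
      (Filter.Eventually.of_forall hAbd)
  have h1Abd : ∀ ω, ‖1 - A ω‖ ≤ 1 := by
    intro ω; rcases hA01 ω with h | h <;> simp [h]
  have h1Ai : Integrable (fun ω => 1 - A ω) P := (integrable_const 1).sub hAi
  -- the residual pieces
  set Z1 : Ω → ℝ := fun ω => A ω * Y ω - A ω * μ1 (X ω) with hZ1_def
  set Z0 : Ω → ℝ := fun ω => (1 - A ω) * Y ω - (1 - A ω) * μ0 (X ω) with hZ0_def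
  have hAYi : Integrable (fun ω => A ω * Y ω) P :=
    hY.bdd_mul hA.aestronglyMeasurable (Filter.Eventually.of_forall hAbd)
  have hAμ1i : Integrable (fun ω => A ω * μ1 (X ω)) P :=
    hμ1i.bdd_mul hA.aestronglyMeasurable (Filter.Eventually.of_forall hAbd)
  have h1AYi : Integrable (fun ω => (1 - A ω) * Y ω) P :=
    hY.bdd_mul (hA.const_sub 1).aestronglyMeasurable
      (Filter.Eventually.of_forall h1Abd)
  have h1Aμ0i : Integrable (fun ω => (1 - A ω) * μ0 (X ω)) P :=
    hμ0i.bdd_mul (hA.const_sub 1).aestronglyMeasurable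
      (Filter.Eventually.of_forall h1Abd)
  have hZ1i : Integrable Z1 P := hAYi.sub hAμ1i
  have hZ0i : Integrable Z0 P := h1AYi.sub h1Aμ0i
  -- conditional expectations of the residual pieces vanish
  have hμ1m : StronglyMeasurable[mE.comap X] (fun ω => μ1 (X ω)) :=
    (hμ1.comp hXm).stronglyMeasurable
  have hμ0m : StronglyMeasurable[mE.comap X] (fun ω => μ0 (X ω)) :=
    (hμ0.comp hXm).stronglyMeasurable
  have hcAμ1 : P[fun ω => A ω * μ1 (X ω) | mE.comap X]
      =ᵐ[P] fun ω => e (X ω) * μ1 (X ω) := by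
    have heq : (fun ω => A ω * μ1 (X ω)) = fun ω => μ1 (X ω) * A ω := by
      funext ω; ring
    have h := condExp_mul_of_stronglyMeasurable_left (μ := P) hμ1m
      (by rw [show (fun ω => μ1 (X ω)) * A = fun ω => A ω * μ1 (X ω) by
            funext ω; simp [mul_comm]]; exact hAμ1i) hAi
    rw [show (fun ω => μ1 (X ω)) * A = fun ω => A ω * μ1 (X ω) by
          funext ω; simp [mul_comm]] at h
    refine h.trans ?_
    filter_upwards [hcondA] with ω hω
    simp only [Pi.mul_apply]
    rw [hω]; ring
  have hcAμ0 : P[fun ω => (1 - A ω) * μ0 (X ω) | mE.comap X]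
      =ᵐ[P] fun ω => (1 - e (X ω)) * μ0 (X ω) := by
    have h := condExp_mul_of_stronglyMeasurable_left (μ := P) hμ0m
      (by rw [show (fun ω => μ0 (X ω)) * (fun ω => 1 - A ω)
              = fun ω => (1 - A ω) * μ0 (X ω) by funext ω; simp [mul_comm]]
          exact h1Aμ0i) h1Ai
    rw [show (fun ω => μ0 (X ω)) * (fun ω => 1 - A ω)
          = fun ω => (1 - A ω) * μ0 (X ω) by funext ω; simp [mul_comm]] at h
    refine h.trans ?_
    have hc1A : P[fun ω => 1 - A ω | mE.comap X] =ᵐ[P] fun ω => 1 - e (X ω) := by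
      have hsub := condExp_sub (μ := P) (m := mE.comap X) (integrable_const (1:ℝ)) hAi
      have heq : (fun ω => 1 - A ω) = (fun _ : Ω => (1:ℝ)) - A := rfl
      rw [heq]
      refine hsub.trans ?_
      rw [condExp_const hm (1:ℝ)]
      filter_upwards [hcondA] with ω hω
      simp [hω]
    filter_upwards [hc1A] with ω hω
    simp only [Pi.mul_apply, hω]; ring
  have hZ1cond : P[Z1 | mE.comap X] =ᵐ[P] 0 := by
    have h := condExp_sub (μ := P) (m := mE.comap X) hAYi hAμ1i
    refine h.trans ?_
    filter_upwards [hc1, hcAμ1] with ω h1 h2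
    simp only [Pi.sub_apply, h1, h2, Pi.zero_apply, sub_self]
  have hZ0cond : P[Z0 | mE.comap X] =ᵐ[P] 0 := by
    have h := condExp_sub (μ := P) (m := mE.comap X) h1AYi h1Aμ0i
    refine h.trans ?_
    filter_upwards [hc0, hcAμ0] with ω h1 h2
    simp only [Pi.sub_apply, h1, h2, Pi.zero_apply, sub_self]
  -- key: integral of (bounded m-measurable) * (residual with zero condexp) is 0
  have key : ∀ (h : Ω → ℝ), StronglyMeasurable[mE.comap X] h → ∀ C : ℝ,
      (∀ ω, |h ω| ≤ C) → ∀ Z : Ω → ℝ, Integrable Z P →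
      P[Z | mE.comap X] =ᵐ[P] 0 → ∫ ω, h ω * Z ω ∂P = 0 := by
    intro h hmh C hC Z hZ hZ0
    have hint : Integrable (fun ω => h ω * Z ω) P :=
      hZ.bdd_mul ((hmh.mono hm).aestronglyMeasurable)
        (Filter.Eventually.of_forall fun ω => by
          rw [Real.norm_eq_abs]; exact hC ω)
    have hpull := condExp_stronglyMeasurable_mul_of_bound hm hmh hZ C
      (Filter.Eventually.of_forall fun ω => by
        rw [Real.norm_eq_abs]; exact hC ω)
    have hz : (h * P[Z | mE.comap X]) =ᵐ[P] (0 : Ω → ℝ) := by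
      filter_upwards [hZ0] with ω hω
      simp only [Pi.mul_apply, hω, Pi.zero_apply, mul_zero]
    calc ∫ ω, h ω * Z ω ∂P
        = ∫ ω, (P[h * Z | mE.comap X]) ω ∂P :=
          (integral_condExp (f := h * Z) hm).symm
      _ = ∫ ω, (0 : Ω → ℝ) ω ∂P := integral_congr_ae (hpull.trans hz)
      _ = 0 := by simp

  -- coordinate bound in EuclideanSpace
  have hcoord : ∀ (v : EuclideanSpace ℝ (Fin d)) (i : Fin d), |v i| ≤ ‖v‖ := by
    intro v i
    have h1 : ⟪EuclideanSpace.single i (1 : ℝ), v⟫ = v i := by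
      simp [EuclideanSpace.inner_single_left]
    calc |v i| = ‖⟪EuclideanSpace.single i (1 : ℝ), v⟫‖ := by
          rw [h1, Real.norm_eq_abs]
      _ ≤ ‖EuclideanSpace.single i (1 : ℝ)‖ * ‖v‖ := norm_inner_le_norm _ _
      _ = ‖v‖ := by rw [EuclideanSpace.norm_single]; simp
  -- the centered pseudo-outcome
  set R : Ω → ℝ := fun ω => ψ ω - ⟪b (X ω), θ₀⟫ with hR_def
  have hinneri : Integrable (fun ω => ⟪b (X ω), θ₀⟫) P := by
    have heq : (fun ω => ⟪b (X ω), θ₀⟫) = fun ω => μ1 (X ω) - μ0 (X ω) :=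
      funext fun ω => (hspec (X ω)).symm
    rw [heq]; exact hμ1i.sub hμ0i
  have hRi : Integrable R P := hψi.sub hinneri
  have hfi : Integrable (fun ω => R ω • b (X ω)) P := by
    refine Integrable.mono' (hRi.norm.const_mul K)
      (hRi.aestronglyMeasurable.smul (hb.comp hX).aestronglyMeasurable) ?_
    refine Filter.Eventually.of_forall fun ω => ?_
    rw [norm_smul]
    calc ‖R ω‖ * ‖b (X ω)‖ ≤ ‖R ω‖ * K :=
          mul_le_mul_of_nonneg_left (hK (X ω)) (norm_nonneg _)
      _ = K * ‖R ω‖ := mul_comm _ _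
  -- each coordinate integral vanishes
  have hcoordint : ∀ i : Fin d, ∫ ω, R ω * (b (X ω) i) ∂P = 0 := by
    intro i
    have hbi : Measurable fun x => (b x) i :=
      (EuclideanSpace.proj (𝕜 := ℝ) i).continuous.measurable.comp hb
    set h1 : Ω → ℝ := fun ω => b (X ω) i / e (X ω) with hh1_def
    set h0 : Ω → ℝ := fun ω => b (X ω) i / (1 - e (X ω)) with hh0_def
    have hh1m : StronglyMeasurable[mE.comap X] h1 :=
      ((hbi.div he).comp hXm).stronglyMeasurable
    have hh0m : StronglyMeasurable[mE.comap X] h0 :=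
      ((hbi.div (measurable_const.sub he)).comp hXm).stronglyMeasurable
    have hbK : ∀ ω : Ω, |b (X ω) i| ≤ K :=
      fun ω => (hcoord (b (X ω)) i).trans (hK (X ω))
    have hbd1 : ∀ ω, |h1 ω| ≤ K / ε := by
      intro ω
      have hKnn : 0 ≤ K := (abs_nonneg _).trans (hbK ω)
      have he' := he0 (X ω)
      rw [hh1_def, abs_div, abs_of_pos he']
      exact div_le_div₀ hKnn (hbK ω) hε0 (hebd (X ω)).1
    have hbd0 : ∀ ω, |h0 ω| ≤ K / ε := by
      intro ω
      have hKnn : 0 ≤ K := (abs_nonneg _).trans (hbK ω)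
      have h1e : ε ≤ 1 - e (X ω) := by have := (hebd (X ω)).2; linarith
      have h1e' : 0 < 1 - e (X ω) := lt_of_lt_of_le hε0 h1e
      rw [hh0_def, abs_div, abs_of_pos h1e']
      exact div_le_div₀ hKnn (hbK ω) hε0 h1e
    have hI1 : ∫ ω, h1 ω * Z1 ω ∂P = 0 :=
      key h1 hh1m (K / ε) hbd1 Z1 hZ1i hZ1cond
    have hI0 : ∫ ω, h0 ω * Z0 ω ∂P = 0 :=
      key h0 hh0m (K / ε) hbd0 Z0 hZ0i hZ0cond
    have hint1 : Integrable (fun ω => h1 ω * Z1 ω) P :=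
      hZ1i.bdd_mul ((hh1m.mono hm).aestronglyMeasurable)
        (Filter.Eventually.of_forall fun ω => by
          rw [Real.norm_eq_abs]; exact hbd1 ω)
    have hint0 : Integrable (fun ω => h0 ω * Z0 ω) P :=
      hZ0i.bdd_mul ((hh0m.mono hm).aestronglyMeasurable)
        (Filter.Eventually.of_forall fun ω => by
          rw [Real.norm_eq_abs]; exact hbd0 ω)
    have hpt : ∀ ω, R ω * (b (X ω) i) = h1 ω * Z1 ω - h0 ω * Z0 ω := by
      intro ω
      have he' := he0 (X ω)
      have he'' := he1 (X ω)
      have hne : e (X ω) ≠ 0 := ne_of_gt he'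
      have hne1 : (1 : ℝ) - e (X ω) ≠ 0 := ne_of_gt (by linarith)
      rcases hA01 ω with hA' | hA' <;>
        · simp only [hR_def, hψ ω, ← hspec (X ω), hZ1_def, hZ0_def,
            hh1_def, hh0_def, hA']
          field_simp
          ring
    calc ∫ ω, R ω * (b (X ω) i) ∂P
        = ∫ ω, (h1 ω * Z1 ω - h0 ω * Z0 ω) ∂P := by
          exact integral_congr_ae (Filter.Eventually.of_forall hpt)
      _ = (∫ ω, h1 ω * Z1 ω ∂P) - ∫ ω, h0 ω * Z0 ω ∂P :=
          integral_sub hint1 hint0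
      _ = 0 := by rw [hI1, hI0, sub_zero]
  -- conclude
  have hfinal : ∀ i : Fin d,
      (∫ ω, R ω • b (X ω) ∂P) i = 0 := by
    intro i
    have hproj := (EuclideanSpace.proj (𝕜 := ℝ) i).integral_comp_comm hfi
    have heval : (fun ω => (EuclideanSpace.proj (𝕜 := ℝ) i) (R ω • b (X ω)))
        = fun ω => R ω * (b (X ω) i) := by
      funext ω; simp [smul_eq_mul]
    rw [heval] at hproj
    have : (EuclideanSpace.proj (𝕜 := ℝ) i) (∫ ω, R ω • b (X ω) ∂P)
        = (∫ ω, R ω • b (X ω) ∂P) i := rfl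
    rw [this] at hproj
    rw [← hproj, hcoordint i]
  show (∫ ω, R ω • b (X ω) ∂P) = 0
  ext i
  simpa using hfinal i
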